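/- Under the data of the Gaussian worst-case construction (y_t = √(β/n)(√(n−1) − √(t(n−t)) + √((t−1)(n−t+1)))), with Gaussian costs m_n^s := (n−s)·V(y_{s,n}) restricted from inner functions with Q_s = s·V(y_{0,s}) + (indicator s>0)·β adjustments, the equality n·V(y_{0,n}) = (n−t)·V(y_{t,n}) + t·V(y_{0,t}) + β holds for every t = 1,…,n−1. -/

import Mathlib

/-- Mean of the segment (a,b]. -/
noncomputable def segMean (y : ℕ → ℝ) (a b : ℕ) : ℝ :=
  (∑ j ∈ Finset.Ioc a b, y j) / ((b : ℝ) - a)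

/-- Variance of the segment (a,b]. -/
noncomputable def segVar (y : ℕ → ℝ) (a b : ℕ) : ℝ :=
  (∑ j ∈ Finset.Ioc a b, (y j) ^ 2) / ((b : ℝ) - a) - (segMean y a b) ^ 2

theorem stmt_6 (n : ℕ) (hn : 2 ≤ n) (β : ℝ) (hβ : 0 < β) (y : ℕ → ℝ)
    (hy : ∀ t : ℕ, y t = Real.sqrt (β / n) *
      (Real.sqrt ((n : ℝ) - 1) - Real.sqrt ((t : ℝ) * ((n : ℝ) - t))
        + Real.sqrt (((t : ℝ) - 1) * ((n : ℝ) - t + 1)))) :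
    ∀ t : ℕ, 1 ≤ t → t ≤ n - 1 →
      (n : ℝ) * segVar y 0 n
        = ((n : ℝ) - t) * segVar y t n + (t : ℝ) * segVar y 0 t + β := by
  intro t ht1 ht2
  have htn : t < n := by omega
  set N : ℝ := (n : ℝ) with hN
  set T : ℝ := (t : ℝ) with hT
  have hT1 : (1 : ℝ) ≤ T := by rw [hT]; exact_mod_cast ht1
  have hTN : T < N := by rw [hT, hN]; exact_mod_cast htn
  have hN0 : (0 : ℝ) < N := by positivity
  have hT0 : (0 : ℝ) < T := by linarith
  have hNT0 : (0 : ℝ) < N - T := by linarith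
  set c : ℝ := Real.sqrt (β / n) with hc
  set m : ℝ := Real.sqrt (N - 1) with hm
  set S : ℕ → ℝ := fun j => Real.sqrt ((j : ℝ) * (N - j)) with hS
  -- telescoping sum of y
  have hsum : ∀ a b : ℕ, a ≤ b →
      ∑ j ∈ Finset.Ioc a b, y j = c * (((b : ℝ) - a) * m + S a - S b) := by
    intro a b hab
    induction b with
    | zero =>
      have : a = 0 := Nat.le_zero.mp hab
      subst this
      simp
    | succ b ih =>
      rcases Nat.eq_or_lt_of_le hab with h | h
      · subst h; simp
      · have hab' : a ≤ b := Nat.lt_succ_iff.mp h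
        rw [Finset.sum_Ioc_succ_top hab', ih hab', hy (b + 1)]
        have h1 : ((b + 1 : ℕ) : ℝ) = (b : ℝ) + 1 := by push_cast; ring
        have h2 : (((b + 1 : ℕ) : ℝ) - 1) * (N - ((b + 1 : ℕ) : ℝ) + 1)
            = (b : ℝ) * (N - b) := by rw [h1]; ring
        have h3 : ((b + 1 : ℕ) : ℝ) * (N - ((b + 1 : ℕ) : ℝ))
            = ((b + 1 : ℕ) : ℝ) * (N - ((b + 1 : ℕ) : ℝ)) := rfl
        simp only [hS]
        rw [h2, h1]
        ring
  have hS0 : S 0 = 0 := by simp [hS]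
  have hSn : S n = 0 := by simp [hS, hN]
  have hA : ∑ j ∈ Finset.Ioc 0 n, y j = c * (N * m) := by
    rw [hsum 0 n (by omega), hS0, hSn]; push_cast; ring
  have hB : ∑ j ∈ Finset.Ioc t n, y j = c * ((N - T) * m + S t) := by
    rw [hsum t n (by omega), hSn]; ring
  have hC : ∑ j ∈ Finset.Ioc 0 t, y j = c * (T * m - S t) := by
    rw [hsum 0 t (by omega), hS0]; push_cast; ring
  have hsplit : (∑ j ∈ Finset.Ioc 0 t, (y j) ^ 2)
      + ∑ j ∈ Finset.Ioc t n, (y j) ^ 2 = ∑ j ∈ Finset.Ioc 0 n, (y j) ^ 2 :=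
    Finset.sum_Ioc_consecutive _ (by omega) (by omega)
  have hs2 : (S t) ^ 2 = T * (N - T) := by
    rw [hS]
    exact Real.sq_sqrt (by positivity)
  have hc2 : c ^ 2 = β / N := by
    rw [hc]
    exact Real.sq_sqrt (by positivity)
  have key : (c * ((N - T) * m + S t)) ^ 2 / (N - T)
      + (c * (T * m - S t)) ^ 2 / T - (c * (N * m)) ^ 2 / N = β := by
    have hc2' : c ^ 2 * N = β := by
      rw [hc2]; field_simp
    field_simp
    linear_combination ((S t) ^ 2) * hc2' + β * hs2
  have e1 : N * segVar y 0 n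
      = (∑ j ∈ Finset.Ioc 0 t, (y j) ^ 2) + (∑ j ∈ Finset.Ioc t n, (y j) ^ 2)
        - (c * (N * m)) ^ 2 / N := by
    unfold segVar segMean
    rw [hA, ← hsplit]
    push_cast
    simp only [← hN, ← hT]
    field_simp [hN0.ne']
    ring
  have e2 : (N - T) * segVar y t n
      = (∑ j ∈ Finset.Ioc t n, (y j) ^ 2)
        - (c * ((N - T) * m + S t)) ^ 2 / (N - T) := by
    unfold segVar segMean
    rw [hB]
    push_cast
    simp only [← hN, ← hT]
    field_simp
  have e3 : T * segVar y 0 t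
      = (∑ j ∈ Finset.Ioc 0 t, (y j) ^ 2) - (c * (T * m - S t)) ^ 2 / T := by
    unfold segVar segMean
    rw [hC]
    push_cast
    simp only [← hN, ← hT]
    field_simp [hT0.ne']
    ring
  linarith [key, e1, e2, e3]
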